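/- Fix h ∈ ℝ^p and θ_0 ∈ ℝ^p, and set θ̃_n = θ_0 + h/√n. For each n, on a probability space (Ω_n, Pr_n), let F_n^L, F_n^U : ℝ^p × Ω_n → ℝ be random functions that are twice continuously differentiable in the first argument, and let A_n be real random variables satisfying the sandwich inequalities n(F_n^L(θ̃_n) − F_n^L(θ_0)) ≤ A_n ≤ n(F_n^U(θ̃_n) − F_n^U(θ_0)). Suppose there are random vectors Δ_n : Ω_n → ℝ^p and symmetric p×p matrices J_n such that, for j ∈ {L, U}: (i) √n ∇_θ F_n^j(θ_0) − Δ_n → 0 in Pr_n-probability, and (ii) for every random sequence s_n with s_n → θ_0 in Pr_n-probability, ∇²_θ F_n^j(s_n) + J_n → 0 in Pr_n-probability. Then A_n − (hᵀ Δ_n − ½ hᵀ J_n h) → 0 in Pr_n-probability. -/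

import Mathlib

open MeasureTheory Filter Topology RealInnerProductSpace

/-- One-dimensional second-order Taylor / mean value theorem. -/
lemma taylor2_aux {g g' g'' : ℝ → ℝ}
    (hd1 : ∀ t, HasDerivAt g (g' t) t) (hd2 : ∀ t, HasDerivAt g' (g'' t) t) :
    ∃ t ∈ Set.Ioo (0:ℝ) 1, g 1 - g 0 = g' 0 + (1/2) * g'' t := by
  set M : ℝ := 2 * (g 1 - g 0 - g' 0) with hM
  set φ : ℝ → ℝ := fun t => g t - g 0 - t * g' 0 - M / 2 * t ^ 2 with hφ
  have hφd : ∀ t, HasDerivAt φ (g' t - g' 0 - M * t) t := by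
    intro t
    have h1 : HasDerivAt (fun t : ℝ => t * g' 0) (g' 0) t := by
      simpa using (hasDerivAt_id t).mul_const (g' 0)
    have h2 : HasDerivAt (fun t : ℝ => M / 2 * t ^ 2) (M / 2 * (2 * t)) t := by
      simpa using (hasDerivAt_pow 2 t).const_mul (M / 2)
    have := (((hd1 t).sub_const (g 0)).sub h1).sub h2
    have e : g' t - g' 0 - M * t = g' t - g' 0 - M / 2 * (2 * t) := by ring
    rw [e]; exact this
  have hφc : Continuous φ :=
    continuous_iff_continuousAt.2 fun t => (hφd t).differentiableAt.continuousAt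
  have hφ0 : φ 0 = 0 := by simp [hφ]
  have hφ1 : φ 1 = 0 := by simp [hφ, hM]
  obtain ⟨c, hc, hc0⟩ := exists_hasDerivAt_eq_zero (f := φ)
    (f' := fun t => g' t - g' 0 - M * t) one_pos (hφc.continuousOn)
    (by rw [hφ0, hφ1]) (fun x _ => hφd x)
  set ψ : ℝ → ℝ := fun t => g' t - g' 0 - M * t with hψ
  have hψd : ∀ t, HasDerivAt ψ (g'' t - M) t := by
    intro t
    have h1 : HasDerivAt (fun t : ℝ => M * t) M t := by
      simpa using (hasDerivAt_id t).const_mul M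
    exact ((hd2 t).sub_const (g' 0)).sub h1
  have hψc : Continuous ψ :=
    continuous_iff_continuousAt.2 fun t => (hψd t).differentiableAt.continuousAt
  obtain ⟨τ, hτ, hτ0⟩ := exists_hasDerivAt_eq_zero (f := ψ)
    (f' := fun t => g'' t - M) hc.1 (hψc.continuousOn)
    (by simp [hψ]; linarith [hc0]) (fun x _ => hψd x)
  refine ⟨τ, ⟨hτ.1, hτ.2.trans hc.2⟩, ?_⟩
  have : g'' τ = M := by linarith [hτ0]
  rw [this, hM]; ring


/-- The inverse of `toDual` as a genuine `ℝ`-continuous-linear map (finite dimension). -/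
noncomputable def dualSymmCLM (d : ℕ) :
    (EuclideanSpace ℝ (Fin d) →L[ℝ] ℝ) →L[ℝ] EuclideanSpace ℝ (Fin d) :=
  LinearMap.toContinuousLinearMap
    { toFun := fun f => (InnerProductSpace.toDual ℝ (EuclideanSpace ℝ (Fin d))).symm f
      map_add' := fun f g => map_add _ f g
      map_smul' := fun c f => by
        simpa using (InnerProductSpace.toDual ℝ (EuclideanSpace ℝ (Fin d))).symm.map_smulₛₗ c f }

lemma dualSymmCLM_apply (d : ℕ) (f : EuclideanSpace ℝ (Fin d) →L[ℝ] ℝ) :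
    dualSymmCLM d f = (InnerProductSpace.toDual ℝ (EuclideanSpace ℝ (Fin d))).symm f := rfl


/-- Vector second-order Taylor expansion with gradient / Hessian at an intermediate point. -/
lemma taylor_vec {d : ℕ} (F : EuclideanSpace ℝ (Fin d) → ℝ) (hF : ContDiff ℝ 2 F)
    (a v : EuclideanSpace ℝ (Fin d)) :
    ∃ ξ : EuclideanSpace ℝ (Fin d), ‖ξ - a‖ ≤ ‖v‖ ∧
      F (a + v) - F a =
        ⟪gradient F a, v⟫ + (1/2) * ⟪v, (fderiv ℝ (gradient F) ξ) v⟫ := by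
  classical
  set L : ℝ → EuclideanSpace ℝ (Fin d) := fun t => a + t • v with hLdef
  have hL : ∀ t : ℝ, HasDerivAt L v t := by
    intro t
    simpa [hLdef] using ((hasDerivAt_id t).smul_const v).const_add a
  have hFd : Differentiable ℝ F := hF.differentiable (by norm_num)
  set D1 := fderiv ℝ F with hD1def
  have hD1 : ContDiff ℝ 1 D1 := hF.fderiv_right (by norm_num)
  have hD1d : Differentiable ℝ D1 := hD1.differentiable one_ne_zero
  set g : ℝ → ℝ := fun t => F (L t) with hgdef
  have hg1 : ∀ t, HasDerivAt g (D1 (L t) v) t := fun t =>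
    (hFd (L t)).hasFDerivAt.comp_hasDerivAt t (hL t)
  have hg2 : ∀ t, HasDerivAt (fun t => D1 (L t) v) ((fderiv ℝ D1 (L t) v) v) t := by
    intro t
    have h1 : HasDerivAt (fun t => D1 (L t)) (fderiv ℝ D1 (L t) v) t :=
      (hD1d (L t)).hasFDerivAt.comp_hasDerivAt t (hL t)
    exact (ContinuousLinearMap.apply ℝ ℝ v).hasFDerivAt.comp_hasDerivAt t h1
  obtain ⟨τ, hτ, heq⟩ := taylor2_aux hg1 hg2
  refine ⟨L τ, ?_, ?_⟩
  · have : L τ - a = τ • v := by simp [hLdef]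
    rw [this, norm_smul]
    have : |τ| ≤ 1 := by
      rw [abs_le]; constructor <;> [linarith [hτ.1]; linarith [hτ.2]]
    calc |τ| * ‖v‖ ≤ 1 * ‖v‖ := by
          exact mul_le_mul_of_nonneg_right this (norm_nonneg v)
      _ = ‖v‖ := one_mul _
  · -- rewrite the Taylor identity
    have hg1v : g 1 = F (a + v) := by simp [hgdef, hLdef]
    have hg0v : g 0 = F a := by simp [hgdef, hLdef]
    -- gradient identities
    have hgrad : ∀ x w : EuclideanSpace ℝ (Fin d), ⟪gradient F x, w⟫ = D1 x w := fun x w =>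
      InnerProductSpace.toDual_symm_apply
    have hgradfun : gradient F = fun x => dualSymmCLM d (D1 x) := rfl
    have hderivgrad : fderiv ℝ (gradient F) (L τ) =
        (dualSymmCLM d).comp (fderiv ℝ D1 (L τ)) := by
      rw [hgradfun]
      exact (((dualSymmCLM d).hasFDerivAt).comp (L τ)
        (hD1d (L τ)).hasFDerivAt).fderiv
    have hhess : ⟪v, (fderiv ℝ (gradient F) (L τ)) v⟫ = (fderiv ℝ D1 (L τ) v) v := by
      rw [hderivgrad]
      rw [ContinuousLinearMap.comp_apply, dualSymmCLM_apply, real_inner_comm]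
      exact InnerProductSpace.toDual_symm_apply
    rw [← hg1v, ← hg0v, heq, hhess, hgrad]
    have h0 : L 0 = a := by simp [hLdef]
    rw [h0]

lemma key_lemma {d : ℕ} (h θ0 : EuclideanSpace ℝ (Fin d)) (F : EuclideanSpace ℝ (Fin d) → ℝ)
    (hF : ContDiff ℝ 2 F) (n : ℕ) (hn : 1 ≤ n) (Δv : EuclideanSpace ℝ (Fin d))
    (Jc : EuclideanSpace ℝ (Fin d) →L[ℝ] EuclideanSpace ℝ (Fin d)) :
    ∃ ξ : EuclideanSpace ℝ (Fin d), ‖ξ - θ0‖ ≤ (Real.sqrt n)⁻¹ * ‖h‖ ∧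
      (n : ℝ) * (F (θ0 + (Real.sqrt n)⁻¹ • h) - F θ0) - (⟪h, Δv⟫ - (1/2) * ⟪h, Jc h⟫) =
        ⟪h, Real.sqrt n • gradient F θ0 - Δv⟫ +
          (1/2) * ⟪h, ((fderiv ℝ (gradient F) ξ) + Jc) h⟫ := by
  obtain ⟨ξ, hξ, heq⟩ := taylor_vec F hF θ0 ((Real.sqrt n)⁻¹ • h)
  have hr0 : (0:ℝ) < Real.sqrt n := Real.sqrt_pos.2 (by exact_mod_cast hn)
  set r : ℝ := Real.sqrt n with hrdef
  have hrr : r * r = (n:ℝ) := Real.mul_self_sqrt (Nat.cast_nonneg n)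
  refine ⟨ξ, ?_, ?_⟩
  · rwa [norm_smul, Real.norm_eq_abs, abs_of_nonneg (inv_nonneg.2 hr0.le)] at hξ
  · set H := fderiv ℝ (gradient F) ξ with hHdef
    have e1 : ⟪gradient F θ0, (r⁻¹ • h : EuclideanSpace ℝ (Fin d))⟫
        = r⁻¹ * ⟪h, gradient F θ0⟫ := by
      rw [real_inner_smul_right, real_inner_comm]
    have e2 : ⟪(r⁻¹ • h : EuclideanSpace ℝ (Fin d)), H (r⁻¹ • h)⟫
        = r⁻¹ * (r⁻¹ * ⟪h, H h⟫) := by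
      rw [ContinuousLinearMap.map_smul, real_inner_smul_left, real_inner_smul_right]
    rw [heq, e1, e2]
    have e3 : ⟪h, r • gradient F θ0 - Δv⟫ = r * ⟪h, gradient F θ0⟫ - ⟪h, Δv⟫ := by
      rw [inner_sub_right, real_inner_smul_right]
    have e4 : ⟪h, (H + Jc) h⟫ = ⟪h, H h⟫ + ⟪h, Jc h⟫ := by
      rw [ContinuousLinearMap.add_apply, inner_add_right]
    rw [e3, e4, ← hrr]
    have hrne : r ≠ 0 := ne_of_gt hr0
    field_simp
    ring

lemma choose_xi {d : ℕ} (h θ0 : EuclideanSpace ℝ (Fin d)) (F : EuclideanSpace ℝ (Fin d) → ℝ)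
    (hF : ContDiff ℝ 2 F) (n : ℕ) (Δv : EuclideanSpace ℝ (Fin d))
    (Jc : EuclideanSpace ℝ (Fin d) →L[ℝ] EuclideanSpace ℝ (Fin d)) :
    ∃ ξ : EuclideanSpace ℝ (Fin d), 1 ≤ n →
      (‖ξ - θ0‖ ≤ (Real.sqrt n)⁻¹ * ‖h‖ ∧
      (n : ℝ) * (F (θ0 + (Real.sqrt n)⁻¹ • h) - F θ0) - (⟪h, Δv⟫ - (1/2) * ⟪h, Jc h⟫) =
        ⟪h, Real.sqrt n • gradient F θ0 - Δv⟫ +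
          (1/2) * ⟪h, ((fderiv ℝ (gradient F) ξ) + Jc) h⟫) := by
  by_cases hn : 1 ≤ n
  · obtain ⟨ξ, h1, h2⟩ := key_lemma h θ0 F hF n hn Δv Jc
    exact ⟨ξ, fun _ => ⟨h1, h2⟩⟩
  · exact ⟨θ0, fun hn' => absurd hn' hn⟩

lemma sqrt_inv_mul_tendsto (C : ℝ) :
    Filter.Tendsto (fun n : ℕ => (Real.sqrt n)⁻¹ * C) atTop (𝓝 0) := by
  have hs : Filter.Tendsto (fun n : ℕ => Real.sqrt n) atTop atTop := by
    apply Filter.tendsto_atTop_atTop_of_monotone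
    · intro m n hmn
      exact Real.sqrt_le_sqrt (by exact_mod_cast hmn)
    · intro b
      refine ⟨⌈b⌉₊ ^ 2, ?_⟩
      have : ((⌈b⌉₊ ^ 2 : ℕ) : ℝ) = ((⌈b⌉₊ : ℝ)) ^ 2 := by push_cast; ring
      rw [this, Real.sqrt_sq (Nat.cast_nonneg _)]
      exact Nat.le_ceil b
  simpa using (hs.inv_tendsto_atTop).mul_const C

theorem stmt_12
    (d : ℕ) (h θ0 : EuclideanSpace ℝ (Fin d))
    (Ω : ℕ → Type*) [∀ n, MeasurableSpace (Ω n)]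
    (Pr : (n : ℕ) → Measure (Ω n)) (hPr : ∀ n, IsProbabilityMeasure (Pr n))
    (FL FU : (n : ℕ) → EuclideanSpace ℝ (Fin d) → Ω n → ℝ)
    (hFLdiff : ∀ n ω, ContDiff ℝ 2 fun θ => FL n θ ω)
    (hFUdiff : ∀ n ω, ContDiff ℝ 2 fun θ => FU n θ ω)
    (A : (n : ℕ) → Ω n → ℝ)
    -- sandwich inequalities with θ̃ₙ = θ₀ + h/√n
    (hsand : ∀ (n : ℕ) (ω : Ω n),
      (n : ℝ) * (FL n (θ0 + (Real.sqrt n)⁻¹ • h) ω - FL n θ0 ω) ≤ A n ω ∧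
      A n ω ≤ (n : ℝ) * (FU n (θ0 + (Real.sqrt n)⁻¹ • h) ω - FU n θ0 ω))
    (Δ : (n : ℕ) → Ω n → EuclideanSpace ℝ (Fin d))
    (Jn : ℕ → Matrix (Fin d) (Fin d) ℝ) (hJnsym : ∀ n, (Jn n).IsSymm)
    -- (i) √n ∇Fₙ(θ₀) − Δₙ → 0 in probability, for both F = Fᴸ and F = Fᵁ
    (hgradL : ∀ ε > (0 : ℝ),
      Tendsto (fun n => Pr n {ω | ε <
          ‖Real.sqrt n • gradient (fun θ => FL n θ ω) θ0 - Δ n ω‖})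
        atTop (𝓝 0))
    (hgradU : ∀ ε > (0 : ℝ),
      Tendsto (fun n => Pr n {ω | ε <
          ‖Real.sqrt n • gradient (fun θ => FU n θ ω) θ0 - Δ n ω‖})
        atTop (𝓝 0))
    -- (ii) ∇²Fₙ(sₙ) + Jₙ → 0 in probability for every random sₙ → θ₀ in probability
    (hhessL : ∀ s : (n : ℕ) → Ω n → EuclideanSpace ℝ (Fin d),
      (∀ ε > (0 : ℝ),
        Tendsto (fun n => Pr n {ω | ε < ‖s n ω - θ0‖}) atTop (𝓝 0)) →
      ∀ ε > (0 : ℝ),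
        Tendsto (fun n => Pr n {ω | ε <
            ‖fderiv ℝ (gradient fun θ => FL n θ ω) (s n ω) +
              Matrix.toEuclideanCLM (𝕜 := ℝ) (Jn n)‖})
          atTop (𝓝 0))
    (hhessU : ∀ s : (n : ℕ) → Ω n → EuclideanSpace ℝ (Fin d),
      (∀ ε > (0 : ℝ),
        Tendsto (fun n => Pr n {ω | ε < ‖s n ω - θ0‖}) atTop (𝓝 0)) →
      ∀ ε > (0 : ℝ),
        Tendsto (fun n => Pr n {ω | ε <
            ‖fderiv ℝ (gradient fun θ => FU n θ ω) (s n ω) +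
              Matrix.toEuclideanCLM (𝕜 := ℝ) (Jn n)‖})
          atTop (𝓝 0)) :
    ∀ ε > (0 : ℝ),
      Tendsto (fun n => Pr n {ω | ε <
          |A n ω - (⟪h, Δ n ω⟫ -
            (1 / 2) * ⟪h, (Matrix.toEuclideanCLM (𝕜 := ℝ) (Jn n)) h⟫)|})
        atTop (𝓝 0) := by
  intro ε hε
  classical
  set c : ℝ := ‖h‖ + 1 with hcdef
  have hc0 : (0:ℝ) < c := by positivity
  have hhc : ‖h‖ ≤ c := le_add_of_nonneg_right zero_le_one
  set δ1 : ℝ := ε / (4 * c) with hδ1def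
  set δ2 : ℝ := ε / (2 * c ^ 2) with hδ2def
  have hδ1 : 0 < δ1 := by positivity
  have hδ2 : 0 < δ2 := by positivity
  -- scalar estimate
  have est : ∀ (G : EuclideanSpace ℝ (Fin d))
      (M : EuclideanSpace ℝ (Fin d) →L[ℝ] EuclideanSpace ℝ (Fin d)),
      ‖G‖ ≤ δ1 → ‖M‖ ≤ δ2 → |⟪h, G⟫ + (1/2) * ⟪h, M h⟫| ≤ ε / 2 := by
    intro G M hG hM
    have h1 : |⟪h, G⟫| ≤ ‖h‖ * ‖G‖ := abs_real_inner_le_norm h G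
    have h2 : |⟪h, M h⟫| ≤ ‖h‖ * (‖M‖ * ‖h‖) :=
      (abs_real_inner_le_norm h (M h)).trans
        (mul_le_mul_of_nonneg_left (M.le_opNorm h) (norm_nonneg h))
    have k1 : ‖h‖ * ‖G‖ ≤ c * δ1 := mul_le_mul hhc hG (norm_nonneg G) hc0.le
    have k2 : ‖h‖ * (‖M‖ * ‖h‖) ≤ c * (δ2 * c) :=
      mul_le_mul hhc (mul_le_mul hM hhc (norm_nonneg h) hδ2.le) (by positivity) hc0.le
    have e1 : c * δ1 = ε / 4 := by
      rw [hδ1def]; field_simp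
    have e2 : c * (δ2 * c) = ε / 2 := by
      rw [hδ2def]; field_simp
    calc |⟪h, G⟫ + (1/2) * ⟪h, M h⟫| ≤ |⟪h, G⟫| + (1/2) * |⟪h, M h⟫| := by
          refine (abs_add_le _ _).trans ?_
          rw [abs_mul]
          simp [abs_of_nonneg]
      _ ≤ ε / 4 + (1/2) * (ε / 2) := by
          have : |⟪h, G⟫| ≤ ε / 4 := h1.trans (k1.trans_eq e1)
          have h4 : |⟪h, M h⟫| ≤ ε / 2 := h2.trans (k2.trans_eq e2)
          nlinarith
      _ ≤ ε / 2 := by linarith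
  -- choose intermediate points
  choose sL hsL using fun n (ω : Ω n) =>
    choose_xi h θ0 (fun θ => FL n θ ω) (hFLdiff n ω) n (Δ n ω)
      (Matrix.toEuclideanCLM (𝕜 := ℝ) (Jn n))
  choose sU hsU using fun n (ω : Ω n) =>
    choose_xi h θ0 (fun θ => FU n θ ω) (hFUdiff n ω) n (Δ n ω)
      (Matrix.toEuclideanCLM (𝕜 := ℝ) (Jn n))
  -- the intermediate points converge to θ0 in probability
  have hstend : ∀ s : (n : ℕ) → Ω n → EuclideanSpace ℝ (Fin d),
      (∀ (n : ℕ), 1 ≤ n → ∀ ω, ‖s n ω - θ0‖ ≤ (Real.sqrt n)⁻¹ * ‖h‖) →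
      ∀ ε' > (0:ℝ), Tendsto (fun n => Pr n {ω | ε' < ‖s n ω - θ0‖}) atTop (𝓝 0) := by
    intro s hs ε' hε'
    have hev : ∀ᶠ n in atTop, Pr n {ω | ε' < ‖s n ω - θ0‖} = 0 := by
      filter_upwards [(sqrt_inv_mul_tendsto ‖h‖).eventually_lt_const hε',
        eventually_ge_atTop 1] with n h1 h2
      have hemp : {ω | ε' < ‖s n ω - θ0‖} = (∅ : Set (Ω n)) := by
        ext ω
        simp only [Set.mem_setOf_eq, Set.mem_empty_iff_false, iff_false, not_lt]
        exact ((hs n h2 ω).trans h1.le)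
      rw [hemp, measure_empty]
    exact tendsto_const_nhds.congr' (hev.mono fun n hn => hn.symm)
  have hGL := hgradL δ1 hδ1
  have hGU := hgradU δ1 hδ1
  have hHL := hhessL sL (hstend sL fun n hn ω => (hsL n ω hn).1) δ2 hδ2
  have hHU := hhessU sU (hstend sU fun n hn ω => (hsU n ω hn).1) δ2 hδ2
  -- eventual domination of the probability
  have hb : ∀ᶠ n in atTop,
      Pr n {ω | ε < |A n ω - (⟪h, Δ n ω⟫ -
          (1 / 2) * ⟪h, (Matrix.toEuclideanCLM (𝕜 := ℝ) (Jn n)) h⟫)|} ≤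
      (Pr n {ω | δ1 < ‖Real.sqrt n • gradient (fun θ => FL n θ ω) θ0 - Δ n ω‖} +
        Pr n {ω | δ2 < ‖fderiv ℝ (gradient fun θ => FL n θ ω) (sL n ω) +
          Matrix.toEuclideanCLM (𝕜 := ℝ) (Jn n)‖}) +
      (Pr n {ω | δ1 < ‖Real.sqrt n • gradient (fun θ => FU n θ ω) θ0 - Δ n ω‖} +
        Pr n {ω | δ2 < ‖fderiv ℝ (gradient fun θ => FU n θ ω) (sU n ω) +
          Matrix.toEuclideanCLM (𝕜 := ℝ) (Jn n)‖}) := by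
    filter_upwards [eventually_ge_atTop 1] with n hn
    refine le_trans (measure_mono ?_)
      (le_trans (measure_union_le _ _)
        (add_le_add (measure_union_le _ _) (measure_union_le _ _)))
    intro ω hω
    simp only [Set.mem_setOf_eq] at hω
    by_contra hcon
    simp only [Set.mem_union, Set.mem_setOf_eq, not_or, not_lt] at hcon
    obtain ⟨⟨hG1, hH1⟩, hG2, hH2⟩ := hcon
    obtain ⟨-, heqL⟩ := hsL n ω hn
    obtain ⟨-, heqU⟩ := hsU n ω hn
    have bL := est _ _ hG1 hH1
    have bU := est _ _ hG2 hH2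
    rw [← heqL] at bL
    rw [← heqU] at bU
    obtain ⟨hlo, hhi⟩ := hsand n ω
    rw [abs_le] at bL bU
    have habs : |A n ω - (⟪h, Δ n ω⟫ -
        (1 / 2) * ⟪h, (Matrix.toEuclideanCLM (𝕜 := ℝ) (Jn n)) h⟫)| ≤ ε / 2 := by
      rw [abs_le]
      constructor
      · have := bL.1
        linarith
      · have := bU.2
        linarith
    linarith [hω.trans_le habs]
  -- conclusion by squeezing
  have hsum := (hGL.add hHL).add (hGU.add hHU)
  simp only [add_zero] at hsum
  exact tendsto_of_tendsto_of_tendsto_of_le_of_le' tendsto_const_nhds hsum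
    (Eventually.of_forall fun n => zero_le) hb
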